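/- For every natural number n, the function J_n defined by the everywhere-convergent series J_n(x) = Σ_{r=0}^∞ (-1)^r / ( r! (n+r)! ) (x/2)^(2r+n) is twice differentiable on ℝ and satisfies Bessel's differential equation x^2 · J_n''(x) + x · J_n'(x) + (x^2 - n^2) · J_n(x) = 0 for every real x. -/

import Mathlib

open Metric

namespace BesselAux


noncomputable def c (n r : ℕ) : ℝ := (-1 : ℝ) ^ r / ((r.factorial : ℝ) * ((n + r).factorial : ℝ))

noncomputable def f (n r : ℕ) (x : ℝ) : ℝ := c n r * (x / 2) ^ (2 * r + n)

noncomputable def f1 (n r : ℕ) (x : ℝ) : ℝ :=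
  c n r * (((2 * r + n : ℕ) : ℝ) * (x / 2) ^ (2 * r + n - 1)) / 2

noncomputable def f2 (n r : ℕ) (x : ℝ) : ℝ :=
  c n r * (((2 * r + n : ℕ) : ℝ) * (((2 * r + n - 1 : ℕ) : ℝ) * (x / 2) ^ (2 * r + n - 2)) / 2) / 2

lemma hasDerivAt_f (n r : ℕ) (x : ℝ) : HasDerivAt (f n r) (f1 n r x) x := by
  have h : HasDerivAt (fun y : ℝ => (y / 2) ^ (2 * r + n))
      (((2 * r + n : ℕ) : ℝ) * (x / 2) ^ (2 * r + n - 1) * (1 / 2)) x := by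
    have := (hasDerivAt_pow (2 * r + n) (x / 2)).comp x ((hasDerivAt_id x).div_const 2)
    simpa [Function.comp_def] using this
  have := h.const_mul (c n r)
  refine this.congr_deriv ?_
  unfold f1; ring

lemma hasDerivAt_f1 (n r : ℕ) (x : ℝ) : HasDerivAt (f1 n r) (f2 n r x) x := by
  have h : HasDerivAt (fun y : ℝ => (y / 2) ^ (2 * r + n - 1))
      (((2 * r + n - 1 : ℕ) : ℝ) * (x / 2) ^ (2 * r + n - 1 - 1) * (1 / 2)) x := by
    have := (hasDerivAt_pow (2 * r + n - 1) (x / 2)).comp x ((hasDerivAt_id x).div_const 2)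
    simpa [Function.comp_def] using this
  have h2 := ((h.const_mul (((2 * r + n : ℕ) : ℝ))).const_mul (c n r)).div_const 2
  refine h2.congr_deriv ?_
  unfold f2
  rw [Nat.sub_sub]
  ring

lemma pow_aux1 (m : ℕ) (x : ℝ) :
    (m : ℝ) * (x * (x / 2) ^ (m - 1)) = (m : ℝ) * 2 * (x / 2) ^ m := by
  cases m with
  | zero => simp
  | succ k => push_cast; rw [pow_succ]; ring

lemma pow_aux2 (m : ℕ) (x : ℝ) :
    (m : ℝ) * ((m - 1 : ℕ) : ℝ) * (x ^ 2 * (x / 2) ^ (m - 2)) =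
      (m : ℝ) * ((m - 1 : ℕ) : ℝ) * 4 * (x / 2) ^ m := by
  match m with
  | 0 => simp
  | 1 => simp
  | (k + 2) =>
    have : k + 2 - 2 = k := by omega
    rw [this]
    push_cast
    rw [pow_succ, pow_succ]
    ring

lemma c_rec (n r : ℕ) : c n (r + 1) * ((r + 1 : ℝ) * ((n : ℝ) + r + 1)) = - c n r := by
  unfold c
  have h1 : ((r + 1).factorial : ℝ) = (r + 1) * r.factorial := by
    rw [Nat.factorial_succ]; push_cast; ring
  have h2 : ((n + (r + 1)).factorial : ℝ) = ((n : ℝ) + r + 1) * (n + r).factorial := by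
    have : n + (r + 1) = (n + r) + 1 := by ring
    rw [this, Nat.factorial_succ]; push_cast; ring
  rw [h1, h2]
  have hr : (r.factorial : ℝ) ≠ 0 := by positivity
  have hnr : ((n + r).factorial : ℝ) ≠ 0 := by positivity
  have hr1 : (r : ℝ) + 1 ≠ 0 := by positivity
  have hnr1 : (n : ℝ) + r + 1 ≠ 0 := by positivity
  field_simp
  ring

lemma termwise (n r : ℕ) (x : ℝ) :
    x ^ 2 * f2 n r x + x * f1 n r x + (x ^ 2 - (n : ℝ) ^ 2) * f n r x =
      4 * r * (r + (n : ℝ)) * f n r x - 4 * (r + 1) * ((r : ℝ) + 1 + n) * f n (r + 1) x := by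
  have h1 := pow_aux1 (2 * r + n) x
  have h2 := pow_aux2 (2 * r + n) x
  have hc := c_rec n r
  have hb : (x / 2) ^ (2 * (r + 1) + n) = (x / 2) ^ (2 * r + n) * (x / 2) ^ 2 := by
    rw [← pow_add]; ring_nf
  unfold f f1 f2
  rw [hb]
  rcases Nat.eq_zero_or_pos (2 * r + n) with h0 | hpos
  · have hr : r = 0 := by omega
    have hn : n = 0 := by omega
    subst hr; subst hn
    simp only [c, Nat.factorial] at *
    norm_num
    ring
  · have hm1 : ((2 * r + n - 1 : ℕ) : ℝ) = 2 * (r : ℝ) + (n : ℝ) - 1 := by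
      rw [Nat.cast_sub hpos]; push_cast; ring
    rw [hm1] at h2 ⊢
    push_cast at h1 h2 ⊢
    linear_combination (c n r / 4) * h2 + (c n r / 2) * h1 +
      (4 * (x / 2) ^ (2 * r + n) * (x / 2) ^ 2) * hc

lemma abs_c_le (n r : ℕ) : |c n r| ≤ 1 / r.factorial := by
  unfold c
  rw [abs_div, abs_pow, abs_neg, abs_one, one_pow,
    abs_of_pos (by positivity : (0:ℝ) < (r.factorial : ℝ) * ((n + r).factorial : ℝ))]
  have h : (r.factorial : ℝ) ≤ (r.factorial : ℝ) * ((n + r).factorial : ℝ) :=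
    le_mul_of_one_le_right (by positivity) (by exact_mod_cast (n + r).factorial_pos)
  exact one_div_le_one_div_of_le (by positivity) h

lemma summable_main (K : ℝ) (n : ℕ) :
    Summable (fun r : ℕ => K ^ (2 * r + n) / r.factorial) := by
  have h := (Real.summable_pow_div_factorial (K ^ 2)).mul_left (K ^ n)
  exact h.congr fun r => by rw [pow_add, pow_mul]; ring

section Bounds

variable {M x : ℝ} (n r : ℕ) (hM : 1 ≤ M) (hx : |x| / 2 ≤ M)

include hM hx in
lemma pow_le {k : ℕ} (hk : k ≤ 2 * r + n) : (|x| / 2) ^ k ≤ M ^ (2 * r + n) :=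
  le_trans (pow_le_pow_left₀ (by positivity) hx k) (pow_le_pow_right₀ hM hk)

lemma cast_le_two_pow {a m : ℕ} (h : a ≤ m) : ((a : ℕ) : ℝ) ≤ 2 ^ m := by
  have h2 : a ≤ 2 ^ m := le_trans h (Nat.lt_two_pow_self (n := m)).le
  exact_mod_cast h2

lemma one_le_two_pow' (m : ℕ) : (1 : ℝ) ≤ 2 ^ m := one_le_pow₀ one_le_two

include hM hx in
lemma bound0' : ‖f n r x‖ ≤ M ^ (2 * r + n) / r.factorial := by
  have step2 : (1 / (r.factorial : ℝ)) * M ^ (2 * r + n) = M ^ (2 * r + n) / r.factorial := by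
    ring
  refine le_trans ?_ step2.le
  simp only [f, Real.norm_eq_abs, abs_mul, abs_div, abs_pow, abs_two]
  gcongr ?_ * ?_
  · exact abs_c_le n r
  · exact pow_le n r hM hx le_rfl

include hM hx in
lemma bound0 : ‖f n r x‖ ≤ (4 * M) ^ (2 * r + n) / r.factorial := by
  refine (bound0' n r hM hx).trans ?_
  gcongr <;> linarith

include hM hx in
lemma bound1 : ‖f1 n r x‖ ≤ (4 * M) ^ (2 * r + n) / r.factorial := by
  have hM0 : (0 : ℝ) < M := lt_of_lt_of_le one_pos hM
  have step2 : (1 / (r.factorial : ℝ)) * ((2 : ℝ) ^ (2 * r + n) * M ^ (2 * r + n)) / 2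
      ≤ (4 * M) ^ (2 * r + n) / r.factorial := by
    rw [mul_pow]
    have h4 : (4 : ℝ) ^ (2 * r + n) = 2 ^ (2 * r + n) * 2 ^ (2 * r + n) := by
      rw [← mul_pow]; norm_num
    rw [h4]
    have e : (1 / (r.factorial : ℝ)) * ((2 : ℝ) ^ (2 * r + n) * M ^ (2 * r + n)) / 2
        = ((2 : ℝ) ^ (2 * r + n) * M ^ (2 * r + n) / r.factorial) / 2 := by ring
    rw [e]
    refine (div_le_self (by positivity) one_le_two).trans ?_
    gcongr
    exact le_mul_of_one_le_left (by positivity) (one_le_two_pow' _)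
  refine le_trans ?_ step2
  simp only [f1, Real.norm_eq_abs, abs_mul, abs_div, abs_pow, abs_two, Nat.abs_cast]
  gcongr
  · exact abs_c_le n r
  · exact cast_le_two_pow le_rfl
  · exact pow_le n r hM hx (Nat.sub_le _ _)

include hM hx in
lemma bound2 : ‖f2 n r x‖ ≤ (4 * M) ^ (2 * r + n) / r.factorial := by
  have hM0 : (0 : ℝ) < M := lt_of_lt_of_le one_pos hM
  have step2 : (1 / (r.factorial : ℝ)) *
      ((2 : ℝ) ^ (2 * r + n) * ((2 : ℝ) ^ (2 * r + n) * M ^ (2 * r + n)) / 2) / 2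
      ≤ (4 * M) ^ (2 * r + n) / r.factorial := by
    rw [mul_pow]
    have h4 : (4 : ℝ) ^ (2 * r + n) = 2 ^ (2 * r + n) * 2 ^ (2 * r + n) := by
      rw [← mul_pow]; norm_num
    rw [h4]
    have e : (1 / (r.factorial : ℝ)) *
        ((2 : ℝ) ^ (2 * r + n) * ((2 : ℝ) ^ (2 * r + n) * M ^ (2 * r + n)) / 2) / 2
        = ((2 : ℝ) ^ (2 * r + n) * (2 : ℝ) ^ (2 * r + n) * M ^ (2 * r + n) / r.factorial) / 4 := by
      ring
    rw [e]
    exact div_le_self (by positivity) (by norm_num)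
  refine le_trans ?_ step2
  simp only [f2, Real.norm_eq_abs, abs_mul, abs_div, abs_pow, abs_two, Nat.abs_cast]
  gcongr
  · exact abs_c_le n r
  · exact cast_le_two_pow le_rfl
  · exact cast_le_two_pow (Nat.sub_le _ _)
  · exact pow_le n r hM hx (Nat.sub_le _ _)

end Bounds


open Metric

lemma summable_f (n : ℕ) (x : ℝ) : Summable (fun r => f n r x) := by
  have hM : (1:ℝ) ≤ max 1 (|x|/2) := le_max_left _ _
  have hx : |x|/2 ≤ max 1 (|x|/2) := le_max_right _ _
  exact Summable.of_norm_bounded (summable_main (4 * max 1 (|x|/2)) n)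
    (fun r => bound0 n r hM hx)

lemma summable_f1 (n : ℕ) (x : ℝ) : Summable (fun r => f1 n r x) := by
  have hM : (1:ℝ) ≤ max 1 (|x|/2) := le_max_left _ _
  have hx : |x|/2 ≤ max 1 (|x|/2) := le_max_right _ _
  exact Summable.of_norm_bounded (summable_main (4 * max 1 (|x|/2)) n)
    (fun r => bound1 n r hM hx)

lemma summable_f2 (n : ℕ) (x : ℝ) : Summable (fun r => f2 n r x) := by
  have hM : (1:ℝ) ≤ max 1 (|x|/2) := le_max_left _ _
  have hx : |x|/2 ≤ max 1 (|x|/2) := le_max_right _ _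
  exact Summable.of_norm_bounded (summable_main (4 * max 1 (|x|/2)) n)
    (fun r => bound2 n r hM hx)

lemma hasDerivAt_tsum_f (n : ℕ) (x : ℝ) :
    HasDerivAt (fun y => ∑' r, f n r y) (∑' r, f1 n r x) x := by
  set R := |x| + 1 with hR
  set M := max 1 (R/2) with hMdef
  have hM : (1:ℝ) ≤ M := le_max_left _ _
  have hmem : x ∈ ball (0:ℝ) R := by
    rw [mem_ball_zero_iff, Real.norm_eq_abs]
    linarith
  refine hasDerivAt_tsum_of_isPreconnected (u := fun r => (4*M)^(2*r+n)/r.factorial)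
    (summable_main _ n) isOpen_ball (convex_ball (0:ℝ) R).isPreconnected
    (fun r y _ => hasDerivAt_f n r y) (fun r y hy => ?_) hmem (summable_f n x) hmem
  have hy' : |y| / 2 ≤ M := by
    rw [mem_ball_zero_iff, Real.norm_eq_abs] at hy
    have : R/2 ≤ M := le_max_right _ _
    linarith
  exact bound1 n r hM hy'

lemma hasDerivAt_tsum_f1 (n : ℕ) (x : ℝ) :
    HasDerivAt (fun y => ∑' r, f1 n r y) (∑' r, f2 n r x) x := by
  set R := |x| + 1 with hR
  set M := max 1 (R/2) with hMdef
  have hM : (1:ℝ) ≤ M := le_max_left _ _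
  have hmem : x ∈ ball (0:ℝ) R := by
    rw [mem_ball_zero_iff, Real.norm_eq_abs]
    linarith
  refine hasDerivAt_tsum_of_isPreconnected (u := fun r => (4*M)^(2*r+n)/r.factorial)
    (summable_main _ n) isOpen_ball (convex_ball (0:ℝ) R).isPreconnected
    (fun r y _ => hasDerivAt_f1 n r y) (fun r y hy => ?_) hmem (summable_f1 n x) hmem
  have hy' : |y| / 2 ≤ M := by
    rw [mem_ball_zero_iff, Real.norm_eq_abs] at hy
    have : R/2 ≤ M := le_max_right _ _
    linarith
  exact bound2 n r hM hy'

lemma summable_g (n : ℕ) (x : ℝ) :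
    Summable (fun r : ℕ => 4 * r * ((r : ℝ) + n) * f n r x) := by
  set M := max 1 (|x|/2) with hMdef
  have hM : (1:ℝ) ≤ M := le_max_left _ _
  have hx : |x|/2 ≤ M := le_max_right _ _
  refine Summable.of_norm_bounded (g := fun r => 4 * ((4*M)^(2*r+n)/r.factorial))
    ((summable_main (4*M) n).mul_left 4) (fun r => ?_)
  have step : 4 * ((2:ℝ)^(2*r+n) * ((2:ℝ)^(2*r+n) * (M^(2*r+n)/r.factorial)))
      = 4 * ((4*M)^(2*r+n)/r.factorial) := by
    rw [mul_pow]
    have h4 : (4 : ℝ) ^ (2 * r + n) = 2 ^ (2 * r + n) * 2 ^ (2 * r + n) := by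
      rw [← mul_pow]; norm_num
    rw [h4]; ring
  refine le_trans ?_ step.le
  have h0 := bound0' n r hM hx
  rw [Real.norm_eq_abs] at h0 ⊢
  have e : |4 * (r:ℝ) * ((r:ℝ) + n) * f n r x| = 4 * (r:ℝ) * ((r:ℝ) + n) * |f n r x| := by
    rw [abs_mul, abs_mul, abs_mul]
    norm_num [abs_of_nonneg (by positivity : (0:ℝ) ≤ (r:ℝ) + n)]
  rw [e]
  have hr1 : ((r:ℕ):ℝ) ≤ 2^(2*r+n) := cast_le_two_pow (by omega)
  have hr2 : ((r:ℝ) + n) ≤ 2^(2*r+n) := by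
    have : (((r+n:ℕ)):ℝ) ≤ 2^(2*r+n) := cast_le_two_pow (by omega)
    push_cast at this
    linarith
  calc 4 * (r:ℝ) * ((r:ℝ) + n) * |f n r x|
      ≤ 4 * (2:ℝ)^(2*r+n) * ((2:ℝ)^(2*r+n)) * (M^(2*r+n)/r.factorial) := by
        gcongr 4 * ?_ * ?_ * ?_
    _ = 4 * ((2:ℝ)^(2*r+n) * ((2:ℝ)^(2*r+n) * (M^(2*r+n)/r.factorial))) := by ring

end BesselAux

open BesselAux in
/-- For every natural number `n`, the Bessel function of the first kind
`J_n(x) = Σ_{r=0}^∞ (-1)^r / (r! (n+r)!) (x/2)^(2r+n)` is twice differentiable on `ℝ`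
and satisfies Bessel's differential equation
`x^2 J_n''(x) + x J_n'(x) + (x^2 - n^2) J_n(x) = 0` for every real `x`. -/
theorem bessel_function_solves_bessel_equation (n : ℕ) :
    let J : ℝ → ℝ := fun x =>
      ∑' r : ℕ, (-1 : ℝ) ^ r / ((r.factorial : ℝ) * ((n + r).factorial : ℝ)) * (x / 2) ^ (2 * r + n)
    (∀ x : ℝ, DifferentiableAt ℝ J x) ∧
    (∀ x : ℝ, DifferentiableAt ℝ (deriv J) x) ∧
    ∀ x : ℝ, x ^ 2 * deriv (deriv J) x + x * deriv J x + (x ^ 2 - (n : ℝ) ^ 2) * J x = 0 := by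
  intro J
  have hJ : J = fun x => ∑' r, f n r x := rfl
  have h1 : ∀ x, HasDerivAt J (∑' r, f1 n r x) x := by
    rw [hJ]; exact hasDerivAt_tsum_f n
  have hd1 : deriv J = fun x => ∑' r, f1 n r x := funext fun x => (h1 x).deriv
  have h2 : ∀ x, HasDerivAt (deriv J) (∑' r, f2 n r x) x := by
    rw [hd1]; exact hasDerivAt_tsum_f1 n
  have hd2 : deriv (deriv J) = fun x => ∑' r, f2 n r x := funext fun x => (h2 x).deriv
  refine ⟨fun x => (h1 x).differentiableAt, fun x => (h2 x).differentiableAt, fun x => ?_⟩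
  simp only [hd2]
  simp only [hd1]
  simp only [hJ]
  set g : ℕ → ℝ := fun r => 4 * r * ((r : ℝ) + n) * f n r x with hgdef
  have S0 := summable_f n x
  have S1 := summable_f1 n x
  have S2 := summable_f2 n x
  have hg : Summable g := summable_g n x
  have hsum2 : Summable (fun r => x^2 * f2 n r x) := S2.mul_left _
  have hsum1 : Summable (fun r => x * f1 n r x) := S1.mul_left _
  have hsum0 : Summable (fun r => (x^2 - (n:ℝ)^2) * f n r x) := S0.mul_left _
  have e1 : ∑' r, (x^2 * f2 n r x + x * f1 n r x + (x^2 - (n:ℝ)^2) * f n r x)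
      = x^2 * (∑' r, f2 n r x) + x * (∑' r, f1 n r x) + (x^2 - (n:ℝ)^2) * (∑' r, f n r x) := by
    rw [Summable.tsum_add (hsum2.add hsum1) hsum0, Summable.tsum_add hsum2 hsum1,
      tsum_mul_left, tsum_mul_left, tsum_mul_left]
  rw [← e1]
  have e2 : ∀ r : ℕ, x^2 * f2 n r x + x * f1 n r x + (x^2 - (n:ℝ)^2) * f n r x
      = g r - g (r+1) := by
    intro r
    rw [hgdef]
    have := termwise n r x
    push_cast
    push_cast at this
    linarith
  rw [tsum_congr e2]
  have hg1 : Summable (fun r => g (r+1)) := (summable_nat_add_iff 1).2 hg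
  rw [Summable.tsum_sub hg hg1]
  have hshift := Summable.tsum_eq_zero_add hg
  have g0 : g 0 = 0 := by simp [hgdef]
  rw [hshift, g0]
  ring
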